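/- Let φ, ψ : [0,1] → [0,1] satisfy conditions (M1)–(M3): φ(0) = 0, φ(1) = 1, φ is nondecreasing on [0,1], and u ↦ φ(u)/u is nonincreasing on (0,1] (and the same for ψ). Let F_U, F_V be distribution functions, and assume: (a) there is a strictly increasing bijection χ : ℝ → ℝ such that whenever F_U(χ(x)) > 0 and F_V(x) > 0 one has φ(F_U(χ(x)))/F_U(χ(x)) = ψ(F_V(x))/F_V(x); (b) either φ is continuous at 0, or x_U = inf{x ∈ ℝ : F_U(x) > 0} > −∞ and F_U is not continuous at x_U, and analogously either ψ is continuous at 0, or x_V = inf{x ∈ ℝ : F_V(x) > 0} > −∞ and F_V is not continuous at x_V; (c) either lim_{u→0+} φ(u)/u = ∞ or there exists x ∈ ℝ with F_U(x) = 0, and analogously either lim_{v→0+} ψ(v)/v = ∞ or there exists x ∈ ℝ with F_V(x) = 0. Then F_X := φ ∘ F_U and F_Y := ψ ∘ F_V are distribution functions, and there exist distribution functions G₁, G₂ such that F_U(x) = F_X(x)·G₁(x) and F_V(y) = F_Y(y)·G₂(y) for all x, y ∈ ℝ, and min{F_U(x)·ψ(F_V(y)), φ(F_U(x))·F_V(y)}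 = F_X(x)·F_Y(y)·min{G₁(x), G₂(y)} for all x, y ∈ ℝ. -/

import Mathlib

open MeasureTheory Set Filter

/-- A distribution function: nondecreasing, right-continuous, with limits 0 at `-∞`
and 1 at `+∞`. -/
def IsDistributionFunction (F : ℝ → ℝ) : Prop :=
  Monotone F ∧ (∀ x, ContinuousWithinAt F (Set.Ici x) x) ∧
    Tendsto F atBot (nhds 0) ∧ Tendsto F atTop (nhds 1)

/-- Auxiliary representation lemma for a single marginal. -/
theorem marshall_aux (φ F : ℝ → ℝ)
    (hφ01 : ∀ u ∈ Icc (0:ℝ) 1, φ u ∈ Icc (0:ℝ) 1)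
    (hφ0 : φ 0 = 0) (hφ1 : φ 1 = 1)
    (hφmono : MonotoneOn φ (Icc (0:ℝ) 1))
    (hφstar : AntitoneOn (fun u => φ u / u) (Ioc (0:ℝ) 1))
    (hF : IsDistributionFunction F)
    (hb : ContinuousWithinAt φ (Icc (0:ℝ) 1) 0 ∨
      (BddBelow {x : ℝ | 0 < F x} ∧ ¬ ContinuousAt F (sInf {x : ℝ | 0 < F x})))
    (hc : Tendsto (fun u => φ u / u) (nhdsWithin 0 (Ioi (0:ℝ))) atTop ∨ ∃ x, F x = 0) :
    IsDistributionFunction (fun x => φ (F x)) ∧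
      ∃ G : ℝ → ℝ, IsDistributionFunction G ∧ ∀ x, F x = φ (F x) * G x := by
  classical
  obtain ⟨hFmono, hFrc, hFbot, hFtop⟩ := hF
  have hF0 : ∀ x, 0 ≤ F x := fun x =>
    le_of_tendsto hFbot ((eventually_le_atBot x).mono fun y hy => hFmono hy)
  have hF1 : ∀ x, F x ≤ 1 := fun x =>
    ge_of_tendsto hFtop ((eventually_ge_atTop x).mono fun y hy => hFmono hy)
  have hmem : ∀ x, F x ∈ Icc (0:ℝ) 1 := fun x => ⟨hF0 x, hF1 x⟩
  have hone : (1:ℝ) ∈ Ioc (0:ℝ) 1 := ⟨one_pos, le_refl 1⟩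
  have hgeu : ∀ u ∈ Ioc (0:ℝ) 1, u ≤ φ u := by
    intro u hu
    have h := hφstar hu hone hu.2
    simp only [hφ1, div_one] at h
    exact (one_le_div hu.1).mp h
  have hφpos : ∀ u ∈ Ioc (0:ℝ) 1, 0 < φ u := fun u hu => lt_of_lt_of_le hu.1 (hgeu u hu)
  have hφle1 : ∀ u ∈ Icc (0:ℝ) 1, φ u ≤ 1 := fun u hu => (hφ01 u hu).2
  have hub : ∀ u u', u ∈ Ioc (0:ℝ) 1 → u' ∈ Ioc (0:ℝ) 1 → u ≤ u' →
      φ u' * u ≤ φ u * u' := by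
    intro u u' hu hu' huu'
    have h := hφstar hu hu' huu'
    exact (div_le_div_iff₀ hu'.1 hu.1).mp h
  -- right continuity of φ ∘ F at points where F is positive
  have hFXrc_pos : ∀ x, 0 < F x →
      Tendsto (fun y => φ (F y)) (nhdsWithin x (Ici x)) (nhds (φ (F x))) := by
    intro x hx
    have hFx : F x ∈ Ioc (0:ℝ) 1 := ⟨hx, hF1 x⟩
    have hmemIci : ∀ᶠ y in nhdsWithin x (Ici x), y ∈ Ici x := eventually_mem_nhdsWithin
    have hlow : ∀ᶠ y in nhdsWithin x (Ici x), φ (F x) ≤ φ (F y) :=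
      hmemIci.mono fun y hy => hφmono (hmem x) (hmem y) (hFmono hy)
    have hupp : ∀ᶠ y in nhdsWithin x (Ici x), φ (F y) ≤ φ (F x) * F y / F x := by
      refine hmemIci.mono fun y hy => ?_
      have h := hub (F x) (F y) hFx ⟨lt_of_lt_of_le hx (hFmono hy), hF1 y⟩ (hFmono hy)
      rw [le_div_iff₀ hx]
      linarith
    have htu : Tendsto (fun y => φ (F x) * F y / F x) (nhdsWithin x (Ici x))
        (nhds (φ (F x))) := by
      have h := (((hFrc x).const_mul (φ (F x))).div_const (F x)).tendsto
      rwa [mul_div_assoc, div_self (ne_of_gt hx), mul_one] at h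
    exact tendsto_of_tendsto_of_tendsto_of_le_of_le' tendsto_const_nhds htu hlow hupp
  -- the key dichotomy coming from assumption (b)
  have hkey : ∀ x, F x = 0 → (¬ ∃ z, x < z ∧ F z = 0) →
      ContinuousWithinAt φ (Icc (0:ℝ) 1) 0 := by
    intro x hx hnz
    rcases hb with h | ⟨hbdd, hdisc⟩
    · exact h
    · exfalso
      have hpos : ∀ z, x < z → 0 < F z := by
        intro z hz
        rcases lt_or_eq_of_le (hF0 z) with h | h
        · exact h
        · exact absurd ⟨z, hz, h.symm⟩ hnz
      have hSx : sInf {y : ℝ | 0 < F y} = x := by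
        apply le_antisymm
        · apply le_of_forall_gt_imp_ge_of_dense
          intro z hz
          exact csInf_le hbdd (hpos z hz)
        · refine le_csInf ⟨x + 1, hpos _ (lt_add_one x)⟩ ?_
          intro y hy
          by_contra hlt
          push_neg at hlt
          have h2 : F y ≤ F x := hFmono hlt.le
          rw [hx] at h2
          exact absurd (lt_of_lt_of_le hy h2) (lt_irrefl 0)
      apply hdisc
      rw [hSx]
      rw [ContinuousAt, ← nhdsLE_sup_nhdsGE x, tendsto_sup]
      constructor
      · have hev : ∀ᶠ y in nhdsWithin x (Iic x), F y = F x :=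
          eventually_mem_nhdsWithin.mono fun y hy =>
            le_antisymm (hFmono hy) (hx ▸ hF0 y)
        exact tendsto_const_nhds.congr' (hev.mono fun y h => h.symm)
      · exact hFrc x
  have hFXmono : Monotone (fun x => φ (F x)) := fun a b hab =>
    hφmono (hmem a) (hmem b) (hFmono hab)
  have hFXrc : ∀ x, ContinuousWithinAt (fun y => φ (F y)) (Ici x) x := by
    intro x
    rcases (lt_or_eq_of_le (hF0 x)) with hx | hx
    · exact hFXrc_pos x hx
    · by_cases hz : ∃ z, x < z ∧ F z = 0
      · obtain ⟨z, hxz, hz0⟩ := hz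
        have hev : ∀ᶠ y in nhdsWithin x (Ici x), φ (F y) = φ (F x) := by
          have h1 : ∀ᶠ y in nhdsWithin x (Ici x), y < z :=
            eventually_nhdsWithin_of_eventually_nhds (eventually_lt_nhds hxz)
          refine h1.mono fun y hy => ?_
          have h2 : F y = 0 := le_antisymm (hz0 ▸ hFmono hy.le) (hF0 y)
          rw [h2, ← hx]
        exact tendsto_const_nhds.congr' (hev.mono fun y h => h.symm)
      · have hcont := hkey x hx.symm hz
        have hFt : Tendsto F (nhdsWithin x (Ici x)) (nhdsWithin 0 (Icc (0:ℝ) 1)) := by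
          rw [tendsto_nhdsWithin_iff]
          exact ⟨hx ▸ hFrc x, Eventually.of_forall fun y => hmem y⟩
        have h := hcont.tendsto.comp hFt
        rw [hφ0] at h
        have hgoal : φ (F x) = 0 := by rw [← hx, hφ0]
        show Tendsto (fun y => φ (F y)) (nhdsWithin x (Ici x)) (nhds (φ (F x)))
        rw [hgoal]
        exact h
  have hFXbot : Tendsto (fun x => φ (F x)) atBot (nhds 0) := by
    by_cases hex : ∃ x₀, F x₀ = 0
    · obtain ⟨x₀, h0⟩ := hex
      have hev : ∀ᶠ x in atBot, (0:ℝ) = φ (F x) :=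
        (eventually_le_atBot x₀).mono fun y hy => by
          rw [le_antisymm (h0 ▸ hFmono hy) (hF0 y), hφ0]
      exact tendsto_const_nhds.congr' hev
    · have hcont : ContinuousWithinAt φ (Icc (0:ℝ) 1) 0 := by
        rcases hb with h | ⟨hbdd, _⟩
        · exact h
        · exfalso
          push_neg at hex
          obtain ⟨b, hbb⟩ := hbdd
          have h1 : b ≤ b - 1 :=
            hbb (lt_of_le_of_ne (hF0 (b - 1)) (Ne.symm (hex (b - 1))))
          linarith
      have hFt : Tendsto F atBot (nhdsWithin 0 (Icc (0:ℝ) 1)) :=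
        tendsto_nhdsWithin_iff.mpr ⟨hFbot, Eventually.of_forall hmem⟩
      have h := hcont.tendsto.comp hFt
      rw [hφ0] at h
      exact h
  have hevpos : ∀ᶠ x in atTop, 0 < F x := hFtop.eventually (eventually_gt_nhds zero_lt_one)
  have hFXtop : Tendsto (fun x => φ (F x)) atTop (nhds 1) :=
    tendsto_of_tendsto_of_tendsto_of_le_of_le' hFtop tendsto_const_nhds
      (hevpos.mono fun x hx => hgeu (F x) ⟨hx, hF1 x⟩)
      (Eventually.of_forall fun x => hφle1 (F x) (hmem x))
  have hFX : IsDistributionFunction (fun x => φ (F x)) := ⟨hFXmono, hFXrc, hFXbot, hFXtop⟩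
  -- construction of G
  set g : ℝ → ℝ := fun u => u / φ u with hgdef
  set c : ℝ := sInf (g '' Ioc (0:ℝ) 1) with hcdef
  have himg_ne : (g '' Ioc (0:ℝ) 1).Nonempty := ⟨g 1, mem_image_of_mem g hone⟩
  have himg_bdd : BddBelow (g '' Ioc (0:ℝ) 1) := by
    refine ⟨0, ?_⟩
    rintro _ ⟨u, hu, rfl⟩
    exact div_nonneg hu.1.le (hφpos u hu).le
  have hc0 : 0 ≤ c := by
    refine le_csInf himg_ne ?_
    rintro _ ⟨u, hu, rfl⟩
    exact div_nonneg hu.1.le (hφpos u hu).le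
  have hcle : ∀ u ∈ Ioc (0:ℝ) 1, c ≤ g u := fun u hu =>
    csInf_le himg_bdd (mem_image_of_mem g hu)
  have hgmono : ∀ u u', u ∈ Ioc (0:ℝ) 1 → u' ∈ Ioc (0:ℝ) 1 → u ≤ u' → g u ≤ g u' := by
    intro u u' hu hu' h
    have h2 := hub u u' hu hu' h
    exact (div_le_div_iff₀ (hφpos u hu) (hφpos u' hu')).mpr (by linarith)
  have hgle1 : ∀ u ∈ Ioc (0:ℝ) 1, g u ≤ 1 := fun u hu =>
    (div_le_one (hφpos u hu)).mpr (hgeu u hu)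
  have hglow : ∀ u ∈ Ioc (0:ℝ) 1, u ≤ g u := by
    intro u hu
    rw [hgdef]
    rw [le_div_iff₀ (hφpos u hu)]
    exact mul_le_of_le_one_right hu.1.le (hφle1 u ⟨hu.1.le, hu.2⟩)
  have hc1 : c ≤ 1 := le_trans (hcle 1 hone) (hgle1 1 hone)
  set P : ℝ → Prop := fun x => ∃ z, x < z ∧ F z = 0 with hPdef
  set G : ℝ → ℝ := fun x => if P x then 0 else if F x = 0 then c else g (F x) with hGdef
  have hPanti : ∀ x y, x ≤ y → P y → P x := by
    rintro x y hxy ⟨z, hz, h0⟩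
    exact ⟨z, lt_of_le_of_lt hxy hz, h0⟩
  have hnotPpos : ∀ x, 0 < F x → ¬ P x := by
    rintro x hx ⟨z, hz, h0⟩
    have := hFmono hz.le
    rw [h0] at this
    exact absurd (lt_of_lt_of_le hx this) (lt_irrefl 0)
  have hGpos_eq : ∀ x, 0 < F x → G x = g (F x) := by
    intro x hx
    rw [hGdef]
    simp only [if_neg (hnotPpos x hx), if_neg (ne_of_gt hx)]
  have hG0 : ∀ x, 0 ≤ G x := by
    intro x
    rw [hGdef]
    by_cases hPx : P x
    · simp [hPx]
    · by_cases hFx : F x = 0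
      · simp [hPx, hFx, hc0]
      · have hx : 0 < F x := lt_of_le_of_ne (hF0 x) (Ne.symm hFx)
        simp only [if_neg hPx, if_neg hFx]
        exact le_trans hx.le (hglow (F x) ⟨hx, hF1 x⟩)
  have hG1 : ∀ x, G x ≤ 1 := by
    intro x
    rw [hGdef]
    by_cases hPx : P x
    · simp [hPx]
    · by_cases hFx : F x = 0
      · simp [hPx, hFx, hc1]
      · have hx : 0 < F x := lt_of_le_of_ne (hF0 x) (Ne.symm hFx)
        simp only [if_neg hPx, if_neg hFx]
        exact hgle1 (F x) ⟨hx, hF1 x⟩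
  have hGmono : Monotone G := by
    intro x y hxy
    by_cases hPx : P x
    · have : G x = 0 := by rw [hGdef]; simp [hPx]
      rw [this]; exact hG0 y
    · have hPy : ¬ P y := fun h => hPx (hPanti x y hxy h)
      by_cases hFx : F x = 0
      · by_cases hFy : F y = 0
        · rw [hGdef]; simp [hPx, hPy, hFx, hFy]
        · have hy : 0 < F y := lt_of_le_of_ne (hF0 y) (Ne.symm hFy)
          rw [hGdef]
          simp only [if_neg hPx, if_neg hPy, if_pos hFx, if_neg hFy]
          exact hcle (F y) ⟨hy, hF1 y⟩
      · have hx : 0 < F x := lt_of_le_of_ne (hF0 x) (Ne.symm hFx)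
        have hy : 0 < F y := lt_of_lt_of_le hx (hFmono hxy)
        rw [hGdef]
        simp only [if_neg hPx, if_neg hPy, if_neg hFx, if_neg (ne_of_gt hy)]
        exact hgmono (F x) (F y) ⟨hx, hF1 x⟩ ⟨hy, hF1 y⟩ (hFmono hxy)
  have hGrc : ∀ x, ContinuousWithinAt G (Ici x) x := by
    intro x
    rcases (lt_or_eq_of_le (hF0 x)) with hx | hx
    · have hne : φ (F x) ≠ 0 := ne_of_gt (hφpos _ ⟨hx, hF1 x⟩)
      have ht : Tendsto (fun y => F y / φ (F y)) (nhdsWithin x (Ici x))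
          (nhds (F x / φ (F x))) := (hFrc x).div (hFXrc_pos x hx) hne
      have hev : ∀ᶠ y in nhdsWithin x (Ici x), F y / φ (F y) = G y :=
        eventually_mem_nhdsWithin.mono fun y hy => by
          have hFy : 0 < F y := lt_of_lt_of_le hx (hFmono hy)
          rw [hGpos_eq y hFy]
      have hGx : G x = F x / φ (F x) := hGpos_eq x hx
      show Tendsto G (nhdsWithin x (Ici x)) (nhds (G x))
      rw [hGx]
      exact ht.congr' hev
    · by_cases hPx : P x
      · obtain ⟨z, hxz, hz0⟩ := hPx
        have hev : ∀ᶠ y in nhdsWithin x (Ici x), (0:ℝ) = G y := by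
          have h1 : ∀ᶠ y in nhdsWithin x (Ici x), y < z :=
            eventually_nhdsWithin_of_eventually_nhds (eventually_lt_nhds hxz)
          refine h1.mono fun y hy => ?_
          have hPy : P y := ⟨z, hy, hz0⟩
          rw [hGdef]; simp [hPy]
        have hGx : G x = 0 := by
          rw [hGdef]; simp [show P x from ⟨z, hxz, hz0⟩]
        show Tendsto G (nhdsWithin x (Ici x)) (nhds (G x))
        rw [hGx]
        exact tendsto_const_nhds.congr' hev
      · have hGx : G x = c := by
          rw [hGdef]; simp [hPx, ← hx]
        rw [← continuousWithinAt_Ioi_iff_Ici]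
        show Tendsto G (nhdsWithin x (Ioi x)) (nhds (G x))
        rw [hGx]
        have hpos : ∀ z, x < z → 0 < F z := fun z hz =>
          lt_of_le_of_ne (hF0 z) fun h => hPx ⟨z, hz, h.symm⟩
        have hgt : Tendsto g (nhdsWithin 0 (Ioc (0:ℝ) 1)) (nhds c) := by
          rw [tendsto_order]
          constructor
          · intro b hb
            exact eventually_mem_nhdsWithin.mono fun u hu => lt_of_lt_of_le hb (hcle u hu)
          · intro b hb
            obtain ⟨v, hv, hlt⟩ := exists_lt_of_csInf_lt himg_ne hb
            obtain ⟨u₀, hu₀, rfl⟩ := hv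
            have h1 : ∀ᶠ u in nhdsWithin 0 (Ioc (0:ℝ) 1), u < u₀ :=
              eventually_nhdsWithin_of_eventually_nhds (eventually_lt_nhds hu₀.1)
            exact (h1.and eventually_mem_nhdsWithin).mono fun u ⟨h2, h3⟩ =>
              lt_of_le_of_lt (hgmono u u₀ h3 hu₀ h2.le) hlt
        have hFt : Tendsto F (nhdsWithin x (Ioi x)) (nhdsWithin 0 (Ioc (0:ℝ) 1)) := by
          rw [tendsto_nhdsWithin_iff]
          constructor
          · have h := (hFrc x).mono_left (nhdsWithin_mono x Ioi_subset_Ici_self)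
            rwa [← hx] at h
          · exact eventually_mem_nhdsWithin.mono fun y hy => ⟨hpos y hy, hF1 y⟩
        refine (hgt.comp hFt).congr' ?_
        exact eventually_mem_nhdsWithin.mono fun y hy => by
          have hFy : 0 < F y := hpos y hy
          simp only [Function.comp]
          rw [hGpos_eq y hFy]
  have hGbot : Tendsto G atBot (nhds 0) := by
    by_cases hex : ∃ x₀, F x₀ = 0
    · obtain ⟨x₀, h0⟩ := hex
      have hev : ∀ᶠ x in atBot, (0:ℝ) = G x :=
        (eventually_lt_atBot x₀).mono fun y hy => by
          have hPy : P y := ⟨x₀, hy, h0⟩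
          rw [hGdef]; simp [hPy]
      exact tendsto_const_nhds.congr' hev
    · push_neg at hex
      have hpos : ∀ x, 0 < F x := fun x => lt_of_le_of_ne (hF0 x) (Ne.symm (hex x))
      have hcc : Tendsto (fun u => φ u / u) (nhdsWithin 0 (Ioi (0:ℝ))) atTop := by
        rcases hc with h | ⟨x₀, h0⟩
        · exact h
        · exact absurd h0 (hex x₀)
      have hFt : Tendsto F atBot (nhdsWithin 0 (Ioi (0:ℝ))) :=
        tendsto_nhdsWithin_iff.mpr ⟨hFbot, Eventually.of_forall fun x => hpos x⟩
      have h := (hcc.comp hFt).inv_tendsto_atTop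
      refine h.congr fun x => ?_
      have h1 : 0 < F x := hpos x
      simp only [Pi.inv_apply, Function.comp]
      rw [inv_div]
      exact (hGpos_eq x h1).symm
  have hGtop : Tendsto G atTop (nhds 1) := by
    refine tendsto_of_tendsto_of_tendsto_of_le_of_le' hFtop tendsto_const_nhds ?_
      (Eventually.of_forall fun x => hG1 x)
    refine hevpos.mono fun x hx => ?_
    rw [hGpos_eq x hx]
    exact hglow (F x) ⟨hx, hF1 x⟩
  have hEq : ∀ x, F x = φ (F x) * G x := by
    intro x
    by_cases hFx : F x = 0
    · rw [hFx, hφ0, zero_mul]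
    · have hx : 0 < F x := lt_of_le_of_ne (hF0 x) (Ne.symm hFx)
      rw [hGpos_eq x hx, hgdef]
      rw [mul_comm, div_mul_cancel₀ _ (ne_of_gt (hφpos (F x) ⟨hx, hF1 x⟩))]
  exact ⟨hFX, G, ⟨hGmono, hGrc, hGbot, hGtop⟩, hEq⟩

/-- Given Marshall generators `φ, ψ` and marginal distribution functions `F_U, F_V`
satisfying the compatibility assumptions (a)-(c), the functions `φ ∘ F_U` and `ψ ∘ F_V`
are distribution functions and there exist distribution functions `G₁, G₂` realizing the
Marshall copula `min {u ψ(v), φ(u) v}` as a comonotonic shock model. -/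
theorem marshall_shock_representation (φ ψ : ℝ → ℝ)
    -- (M1)-(M3) for φ, and φ maps [0,1] into [0,1]
    (hφ01 : ∀ u ∈ Icc (0:ℝ) 1, φ u ∈ Icc (0:ℝ) 1)
    (hφ0 : φ 0 = 0) (hφ1 : φ 1 = 1)
    (hφmono : MonotoneOn φ (Icc (0:ℝ) 1))
    (hφstar : AntitoneOn (fun u => φ u / u) (Ioc (0:ℝ) 1))
    -- (M1)-(M3) for ψ, and ψ maps [0,1] into [0,1]
    (hψ01 : ∀ v ∈ Icc (0:ℝ) 1, ψ v ∈ Icc (0:ℝ) 1)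
    (hψ0 : ψ 0 = 0) (hψ1 : ψ 1 = 1)
    (hψmono : MonotoneOn ψ (Icc (0:ℝ) 1))
    (hψstar : AntitoneOn (fun v => ψ v / v) (Ioc (0:ℝ) 1))
    (F_U F_V : ℝ → ℝ)
    (hFU : IsDistributionFunction F_U) (hFV : IsDistributionFunction F_V)
    -- assumption (a)
    (χ : ℝ → ℝ) (hχ : StrictMono χ) (hχbij : Function.Bijective χ)
    (ha : ∀ x : ℝ, 0 < F_U (χ x) → 0 < F_V x →
      φ (F_U (χ x)) / F_U (χ x) = ψ (F_V x) / F_V x)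
    -- assumption (b)
    (hbφ : ContinuousWithinAt φ (Icc (0:ℝ) 1) 0 ∨
      (BddBelow {x : ℝ | 0 < F_U x} ∧ ¬ ContinuousAt F_U (sInf {x : ℝ | 0 < F_U x})))
    (hbψ : ContinuousWithinAt ψ (Icc (0:ℝ) 1) 0 ∨
      (BddBelow {x : ℝ | 0 < F_V x} ∧ ¬ ContinuousAt F_V (sInf {x : ℝ | 0 < F_V x})))
    -- assumption (c)
    (hcφ : Tendsto (fun u => φ u / u) (nhdsWithin 0 (Ioi (0:ℝ))) atTop ∨
      ∃ x : ℝ, F_U x = 0)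
    (hcψ : Tendsto (fun v => ψ v / v) (nhdsWithin 0 (Ioi (0:ℝ))) atTop ∨
      ∃ x : ℝ, F_V x = 0) :
    IsDistributionFunction (fun x => φ (F_U x)) ∧
    IsDistributionFunction (fun y => ψ (F_V y)) ∧
    ∃ G₁ G₂ : ℝ → ℝ, IsDistributionFunction G₁ ∧ IsDistributionFunction G₂ ∧
      (∀ x, F_U x = φ (F_U x) * G₁ x) ∧ (∀ y, F_V y = ψ (F_V y) * G₂ y) ∧
      (∀ x y, min (F_U x * ψ (F_V y)) (φ (F_U x) * F_V y) =
        φ (F_U x) * ψ (F_V y) * min (G₁ x) (G₂ y)) := by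
  obtain ⟨hFX, G₁, hG₁, hEq₁⟩ :=
    marshall_aux φ F_U hφ01 hφ0 hφ1 hφmono hφstar hFU hbφ hcφ
  obtain ⟨hFY, G₂, hG₂, hEq₂⟩ :=
    marshall_aux ψ F_V hψ01 hψ0 hψ1 hψmono hψstar hFV hbψ hcψ
  refine ⟨hFX, hFY, G₁, G₂, hG₁, hG₂, hEq₁, hEq₂, ?_⟩
  intro x y
  obtain ⟨hUm, _, hUbot, hUtop⟩ := hFU
  obtain ⟨hVm, _, hVbot, hVtop⟩ := hFV
  have hU0 : 0 ≤ F_U x :=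
    le_of_tendsto hUbot ((eventually_le_atBot x).mono fun z hz => hUm hz)
  have hU1 : F_U x ≤ 1 :=
    ge_of_tendsto hUtop ((eventually_ge_atTop x).mono fun z hz => hUm hz)
  have hV0 : 0 ≤ F_V y :=
    le_of_tendsto hVbot ((eventually_le_atBot y).mono fun z hz => hVm hz)
  have hV1 : F_V y ≤ 1 :=
    ge_of_tendsto hVtop ((eventually_ge_atTop y).mono fun z hz => hVm hz)
  have ha' : 0 ≤ φ (F_U x) := (hφ01 _ ⟨hU0, hU1⟩).1
  have hb' : 0 ≤ ψ (F_V y) := (hψ01 _ ⟨hV0, hV1⟩).1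
  have key : ∀ a b g1 g2 : ℝ, 0 ≤ a → 0 ≤ b →
      min (a * g1 * b) (a * (b * g2)) = a * b * min g1 g2 := by
    intro a b g1 g2 ha0 hb0
    rcases le_total g1 g2 with h | h
    · rw [min_eq_left h, min_eq_left
        (by nlinarith [mul_nonneg (mul_nonneg ha0 hb0) (sub_nonneg.mpr h)])]
      ring
    · rw [min_eq_right h, min_eq_right
        (by nlinarith [mul_nonneg (mul_nonneg ha0 hb0) (sub_nonneg.mpr h)])]
      ring
  calc min (F_U x * ψ (F_V y)) (φ (F_U x) * F_V y)
      = min (φ (F_U x) * G₁ x * ψ (F_V y)) (φ (F_U x) * (ψ (F_V y) * G₂ y)) := by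
        rw [← hEq₁ x, ← hEq₂ y]
    _ = φ (F_U x) * ψ (F_V y) * min (G₁ x) (G₂ y) := key _ _ _ _ ha' hb'
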